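/- For 1<q<p, the function G(s₁) = ω_p(s₁)^p − (p/(p−q)) ω_p(s₁)^{p−q} + (q/(p−q)) s₁ is strictly concave on (0,1), satisfies G(1)=0 and G'(1⁻) = q(q−1)/((p−1)(p−q)) > 0; consequently G(s₁) < 0 for all s₁ ∈ (0,1). -/

import Mathlib

open Real Set

open Filter Topology


noncomputable def Hp (p w : ℝ) : ℝ := p * w ^ (p-1) - (p-1) * w ^ p

lemma Hp_one (p : ℝ) : Hp p 1 = 1 := by simp [Hp]

lemma Hp_deriv {p : ℝ} (w : ℝ) (hw : 0 < w) :
    HasDerivAt (Hp p) (p*((p-1)*w^(p-2)) - (p-1)*(p*w^(p-1))) w := by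
  have h1 : HasDerivAt (fun x : ℝ => x ^ (p-1)) ((p-1)*w^(p-1-1)) w :=
    Real.hasDerivAt_rpow_const (Or.inl hw.ne')
  have h2 : HasDerivAt (fun x : ℝ => x ^ p) (p*w^(p-1)) w :=
    Real.hasDerivAt_rpow_const (Or.inl hw.ne')
  have := (h1.const_mul p).sub (h2.const_mul (p-1))
  rw [show p-1-1 = p-2 by ring] at this; exact this

lemma Hp_deriv_neg {p : ℝ} (hp : 1 < p) {w : ℝ} (hw : 1 < w) :
    p*((p-1)*w^(p-2)) - (p-1)*(p*w^(p-1)) < 0 := by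
  have h1 : w ^ (p-2) < w ^ (p-1) :=
    Real.rpow_lt_rpow_of_exponent_lt hw (by linarith)
  nlinarith [h1, mul_pos (by linarith : (0:ℝ) < p) (by linarith : (0:ℝ) < p - 1)]

lemma Hp_contOn {p : ℝ} : ContinuousOn (Hp p) (Ici 1) := fun w hw =>
  ((Hp_deriv w (lt_of_lt_of_le one_pos hw)).continuousAt).continuousWithinAt

lemma Hp_strictAntiOn {p : ℝ} (hp : 1 < p) : StrictAntiOn (Hp p) (Ici 1) := by
  apply strictAntiOn_of_deriv_neg (convex_Ici 1) Hp_contOn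
  intro w hw
  rw [interior_Ici] at hw
  rw [(Hp_deriv w (by linarith [mem_Ioi.mp hw])).deriv]
  exact Hp_deriv_neg hp hw

lemma Hp_b {p : ℝ} (hp : 1 < p) : Hp p (p/(p-1)) = 0 := by
  have hp1 : (0:ℝ) < p - 1 := by linarith
  have hb : (0:ℝ) < p/(p-1) := div_pos (by linarith) hp1
  have h : (p/(p-1)) ^ p = (p/(p-1)) ^ (p-1) * (p/(p-1)) := by
    rw [← Real.rpow_add_one hb.ne']; ring_nf
  have h2 : (p-1) * (p/(p-1)) = p := by field_simp
  rw [Hp, h, mul_comm ((p/(p-1) : ℝ) ^ (p-1)) (p/(p-1) : ℝ), ← mul_assoc, h2]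
  ring


lemma N_neg {q : ℝ} (hq : 1 < q) {w : ℝ} (hw : 1 < w) :
    (q-1)*w^(-q)*(w-1) - 1 + w^(1-q) < 0 := by
  set N : ℝ → ℝ := fun w => (q-1)*w^(-q)*(w-1) - 1 + w^(1-q) with hN
  have hder : ∀ x : ℝ, 0 < x →
      HasDerivAt N ((q-1)*((-q)*x^(-q-1))*(x-1) + (q-1)*x^(-q) + (1-q)*x^(-q)) x := by
    intro x hx
    have h1 : HasDerivAt (fun y : ℝ => y ^ (-q)) ((-q)*x^(-q-1)) x :=
      Real.hasDerivAt_rpow_const (Or.inl hx.ne')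
    have h2 : HasDerivAt (fun y : ℝ => y ^ (1-q)) ((1-q)*x^(-q)) x := by
      have := Real.hasDerivAt_rpow_const (p := 1-q) (Or.inl hx.ne')
      simpa [show (1:ℝ)-q-1 = -q by ring] using this
    have h3 : HasDerivAt (fun y : ℝ => (q-1)*y^(-q)) ((q-1)*((-q)*x^(-q-1))) x :=
      h1.const_mul _
    have h4 : HasDerivAt (fun y : ℝ => y - 1) 1 x := (hasDerivAt_id x).sub_const 1
    have h5 := (h3.mul h4).sub_const 1 |>.add h2
    refine h5.congr_deriv ?_
    ring
  have hanti : StrictAntiOn N (Ici 1) := by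
    apply strictAntiOn_of_deriv_neg (convex_Ici 1)
    · intro x hx
      exact ((hder x (lt_of_lt_of_le one_pos hx)).continuousAt).continuousWithinAt
    · intro x hx
      rw [interior_Ici] at hx
      have hx1 : (1:ℝ) < x := hx
      rw [(hder x (by linarith)).deriv]
      have hp1 : (0:ℝ) < x ^ (-q-1) := Real.rpow_pos_of_pos (by linarith) _
      nlinarith [mul_pos (mul_pos (by linarith : (0:ℝ) < q-1) (by linarith : (0:ℝ) < q)) hp1,
        mul_pos (mul_pos (mul_pos (by linarith : (0:ℝ) < q-1) (by linarith : (0:ℝ) < q)) hp1) (by linarith : (0:ℝ) < x - 1)]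
  have h0 : N 1 = 0 := by simp [hN]
  have := hanti (self_mem_Ici) (mem_Ici.mpr hw.le) hw
  rw [h0] at this
  exact this

lemma P_neg {q : ℝ} (hq : 1 < q) {w : ℝ} (hw : 1 < w) :
    w - w^(1-q) - q*(w-1) < 0 := by
  set P : ℝ → ℝ := fun w => w - w^(1-q) - q*(w-1) with hP
  have hder : ∀ x : ℝ, 0 < x → HasDerivAt P (1 - (1-q)*x^(-q) - q) x := by
    intro x hx
    have h2 : HasDerivAt (fun y : ℝ => y ^ (1-q)) ((1-q)*x^(-q)) x := by
      have := Real.hasDerivAt_rpow_const (p := 1-q) (Or.inl hx.ne')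
      simpa [show (1:ℝ)-q-1 = -q by ring] using this
    have h4 : HasDerivAt (fun y : ℝ => q*(y-1)) q x := by
      simpa using ((hasDerivAt_id x).sub_const 1).const_mul q
    exact ((hasDerivAt_id x).sub h2).sub h4
  have hanti : StrictAntiOn P (Ici 1) := by
    apply strictAntiOn_of_deriv_neg (convex_Ici 1)
    · intro x hx
      exact ((hder x (lt_of_lt_of_le one_pos hx)).continuousAt).continuousWithinAt
    · intro x hx
      rw [interior_Ici] at hx
      have hx1 : (1:ℝ) < x := hx
      rw [(hder x (by linarith)).deriv]
      have hlt : x ^ (-q) < 1 := Real.rpow_lt_one_of_one_lt_of_neg hx1 (by linarith)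
      have hpos : (0:ℝ) < x ^ (-q) := Real.rpow_pos_of_pos (by linarith) _
      nlinarith
  have h0 : P 1 = 0 := by simp [hP]
  have := hanti (self_mem_Ici) (mem_Ici.mpr hw.le) hw
  rw [h0] at this
  exact this



lemma nfun_hasDeriv {q : ℝ} {x : ℝ} (hx : 0 < x) :
    HasDerivAt (fun w : ℝ => w - w^(1-q)) (1 - (1-q)*x^(-q)) x := by
  have h2 : HasDerivAt (fun y : ℝ => y ^ (1-q)) ((1-q)*x^(-q)) x := by
    have := Real.hasDerivAt_rpow_const (p := 1-q) (Or.inl hx.ne')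
    simpa [show (1:ℝ)-q-1 = -q by ring] using this
  exact (hasDerivAt_id x).sub h2

lemma phi_hasDeriv {p q : ℝ} (hp : 1 < p) {w : ℝ} (hw : 1 < w) :
    HasDerivAt (fun w : ℝ => q/(p-q) - (w - w^(1-q))/((w-1)*(p-1)))
      (-(((1 - (1-q)*w^(-q)) * ((w-1)*(p-1)) - (w - w^(1-q)) * (p-1)) / ((w-1)*(p-1))^2)) w := by
  have hn := nfun_hasDeriv (q := q) (lt_trans one_pos hw)
  have hd : HasDerivAt (fun y : ℝ => (y-1)*(p-1)) (p-1) w := by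
    simpa using ((hasDerivAt_id w).sub_const 1).mul_const (p-1)
  have hdenom : (w-1)*(p-1) ≠ 0 := (mul_pos (by linarith) (by linarith)).ne'
  have hdiv := hn.div hd hdenom
  simpa using hdiv.const_sub (q/(p-q))

lemma phi_strictMono {p q : ℝ} (hq : 1 < q) (hpq : q < p) :
    StrictMonoOn (fun w : ℝ => q/(p-q) - (w - w^(1-q))/((w-1)*(p-1))) (Ioi 1) := by
  apply strictMonoOn_of_deriv_pos (convex_Ioi 1)
  · intro x hx
    exact ((phi_hasDeriv (hq.trans hpq) hx).continuousAt).continuousWithinAt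
  · intro x hx
    rw [interior_Ioi] at hx
    have hx' : (1:ℝ) < x := hx
    rw [(phi_hasDeriv (hq.trans hpq) hx).deriv]
    have hN := N_neg hq hx' 
    have hd2 : (0:ℝ) < ((x-1)*(p-1))^2 := by
      have : (x-1)*(p-1) ≠ 0 := by
        have : (0:ℝ) < (x-1)*(p-1) := mul_pos (by linarith [hx']) (by linarith [hq.trans hpq])
        exact this.ne'
      positivity
    have hnum : ((1 - (1-q)*x^(-q)) * ((x-1)*(p-1)) - (x - x^(1-q)) * (p-1)) < 0 := by
      have hp1 : (0:ℝ) < p - 1 := by linarith [hq.trans hpq]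
      nlinarith [hN]
    have := div_neg_of_neg_of_pos hnum hd2
    linarith [this]

lemma phi_gt {p q : ℝ} (hq : 1 < q) (hpq : q < p) {w : ℝ} (hw : 1 < w) :
    q*(q-1)/((p-1)*(p-q)) < q/(p-q) - (w - w^(1-q))/((w-1)*(p-1)) := by
  have hp1 : (0:ℝ) < p - 1 := by linarith
  have hpq' : (0:ℝ) < p - q := by linarith
  have hP := P_neg hq hw
  have h1 : (w - w^(1-q))/((w-1)*(p-1)) < q/(p-1) := by
    rw [div_lt_div_iff₀ (by nlinarith) hp1]
    nlinarith
  have h2 : q*(q-1)/((p-1)*(p-q)) = q/(p-q) - q/(p-1) := by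
    field_simp
    ring
  rw [h2]
  linarith

lemma phi_tendsto {p q : ℝ} (hq : 1 < q) (hpq : q < p) :
    Tendsto (fun w : ℝ => q/(p-q) - (w - w^(1-q))/((w-1)*(p-1))) (𝓝[>] (1:ℝ))
      (𝓝 (q*(q-1)/((p-1)*(p-q)))) := by
  have hp1 : (0:ℝ) < p - 1 := by linarith
  have hpq' : (0:ℝ) < p - q := by linarith
  have hn : HasDerivAt (fun w : ℝ => w - w^(1-q)) q 1 := by
    have := nfun_hasDeriv (q := q) one_pos
    simpa using this
  have hslope : Tendsto (slope (fun w : ℝ => w - w^(1-q)) 1) (𝓝[≠] (1:ℝ)) (𝓝 q) :=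
    hasDerivAt_iff_tendsto_slope.mp hn
  have hslope' : Tendsto (slope (fun w : ℝ => w - w^(1-q)) 1) (𝓝[>] (1:ℝ)) (𝓝 q) :=
    hslope.mono_left (nhdsWithin_mono 1 (fun x hx => ne_of_gt hx))
  have heq : ∀ᶠ w in 𝓝[>] (1:ℝ),
      q/(p-q) - slope (fun w : ℝ => w - w^(1-q)) 1 w / (p-1)
      = q/(p-q) - (w - w^(1-q))/((w-1)*(p-1)) := by
    filter_upwards [self_mem_nhdsWithin] with w hw
    have hw1 : w - 1 ≠ 0 := sub_ne_zero.mpr (ne_of_gt hw)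
    rw [slope_def_field]
    field_simp
    simp
  have : Tendsto (fun w => q/(p-q) - slope (fun w : ℝ => w - w^(1-q)) 1 w / (p-1))
      (𝓝[>] (1:ℝ)) (𝓝 (q/(p-q) - q/(p-1))) :=
    (tendsto_const_nhds.sub (hslope'.div_const _))
  have h2 : q*(q-1)/((p-1)*(p-q)) = q/(p-q) - q/(p-1) := by field_simp; ring
  rw [h2]
  exact Tendsto.congr' heq this



lemma Gderiv_algebra {p q w : ℝ} (hp : 1 < p) (hq : 1 < q) (hpq : q < p) (hw : 1 < w) :
    q/(p-q) - (w - w^(1-q))/((w-1)*(p-1))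
      = p * w^(p-1) * (p*((p-1)*w^(p-2)) - (p-1)*(p*w^(p-1)))⁻¹
        - (p/(p-q)) * ((p-q) * w^(p-q-1) * (p*((p-1)*w^(p-2)) - (p-1)*(p*w^(p-1)))⁻¹)
        + q/(p-q) := by
  have hw0 : (0:ℝ) < w := by linarith
  have hu : (0:ℝ) < w^(p-2) := Real.rpow_pos_of_pos hw0 _
  have hv : (0:ℝ) < w^(1-q) := Real.rpow_pos_of_pos hw0 _
  have e1 : w^(p-1) = w^(p-2) * w := by
    rw [show p-1 = (p-2)+1 by ring, Real.rpow_add hw0, Real.rpow_one]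
  have e2 : w^(p-q-1) = w^(p-2) * w^(1-q) := by
    rw [show p-q-1 = (p-2)+(1-q) by ring, Real.rpow_add hw0]
  rw [e1, e2]
  have hd : p*((p-1)*w^(p-2)) - (p-1)*(p*(w^(p-2) * w)) = p*(p-1)*w^(p-2)*(1-w) := by ring
  rw [hd]
  have hdne : p*(p-1)*w^(p-2)*(1-w) ≠ 0 := by
    have h1 : (0:ℝ) < p*(p-1)*w^(p-2) := mul_pos (mul_pos (by linarith) (by linarith)) hu
    have := mul_neg_of_pos_of_neg h1 (by linarith : 1 - w < 0)
    exact this.ne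
  have hw1 : w - 1 ≠ 0 := sub_ne_zero.mpr hw.ne'
  have hp1 : p - 1 ≠ 0 := sub_ne_zero.mpr (ne_of_gt hp)
  have hpq' : p - q ≠ 0 := sub_ne_zero.mpr (ne_of_gt hpq)
  have hw1' : 1 - w ≠ 0 := (by linarith : 1 - w < 0).ne
  have hu' := hu.ne'
  field_simp
  ring

/-- For `1 < q < p`, `G(s₁) = ω_p(s₁)^p - (p/(p-q)) ω_p(s₁)^(p-q) + (q/(p-q)) s₁` is
strictly concave on `(0,1)`, with `G(1) = 0` and `G'(1⁻) = q(q-1)/((p-1)(p-q)) > 0`;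
consequently `G(s₁) < 0` for all `s₁ ∈ (0,1)`. -/
theorem G_concave_neg (p q : ℝ) (hq : 1 < q) (hpq : q < p)
    (ωp : ℝ → ℝ)
    (hωp : ∀ s ∈ Icc (0 : ℝ) 1, ωp s ∈ Icc 1 (p / (p - 1)) ∧
      p * ωp s ^ (p - 1) - (p - 1) * ωp s ^ p = s) :
    StrictConcaveOn ℝ (Ioo 0 1)
      (fun s₁ : ℝ => ωp s₁ ^ p - (p / (p - q)) * ωp s₁ ^ (p - q) + (q / (p - q)) * s₁) ∧
    ωp 1 ^ p - (p / (p - q)) * ωp 1 ^ (p - q) + (q / (p - q)) * 1 = 0 ∧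
    HasDerivWithinAt
      (fun s₁ : ℝ => ωp s₁ ^ p - (p / (p - q)) * ωp s₁ ^ (p - q) + (q / (p - q)) * s₁)
      (q * (q - 1) / ((p - 1) * (p - q))) (Iio 1) 1 ∧
    0 < q * (q - 1) / ((p - 1) * (p - q)) ∧
    ∀ s₁ ∈ Ioo (0 : ℝ) 1,
      ωp s₁ ^ p - (p / (p - q)) * ωp s₁ ^ (p - q) + (q / (p - q)) * s₁ < 0 := by
  have hp : 1 < p := hq.trans hpq
  have hp1 : (0:ℝ) < p - 1 := by linarith
  have hpq' : (0:ℝ) < p - q := by linarith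
  have hb1 : 1 < p/(p-1) := (one_lt_div hp1).mpr (by linarith)
  have hmem : ∀ s ∈ Icc (0:ℝ) 1, ωp s ∈ Icc 1 (p/(p-1)) := fun s hs => (hωp s hs).1
  have hH : ∀ s ∈ Icc (0:ℝ) 1, Hp p (ωp s) = s := fun s hs => (hωp s hs).2
  have hinj := (Hp_strictAntiOn hp).injOn
  have hanti' := (Hp_strictAntiOn hp).antitoneOn
  have hω1 : ωp 1 = 1 := by
    have h1 := hωp 1 (by norm_num)
    refine hinj (mem_Ici.mpr h1.1.1) self_mem_Ici ?_
    rw [Hp_one]; exact h1.2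
  have hωH : ∀ w, 1 ≤ w → w ≤ p/(p-1) → (Hp p w ∈ Icc (0:ℝ) 1 ∧ ωp (Hp p w) = w) := by
    intro w h1 h2
    have hc : Hp p w ∈ Icc (0:ℝ) 1 := by
      constructor
      · rw [← Hp_b hp]
        exact hanti' (mem_Ici.mpr h1) (mem_Ici.mpr (le_trans h1 h2)) h2
      · rw [← Hp_one p]
        exact hanti' self_mem_Ici (mem_Ici.mpr h1) h1
    exact ⟨hc, hinj (mem_Ici.mpr (hmem _ hc).1) (mem_Ici.mpr h1) (hH _ hc)⟩
  have hωanti : ∀ s ∈ Icc (0:ℝ) 1, ∀ t ∈ Icc (0:ℝ) 1, s < t → ωp t < ωp s := by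
    intro s hs t ht hst
    by_contra hle
    push_neg at hle
    have := hanti' (mem_Ici.mpr (hmem s hs).1) (mem_Ici.mpr (hmem t ht).1) hle
    rw [hH s hs, hH t ht] at this
    linarith
  have hωgt1 : ∀ s ∈ Ico (0:ℝ) 1, 1 < ωp s := by
    intro s hs
    have := hωanti s ⟨hs.1, hs.2.le⟩ 1 (by norm_num) hs.2
    rwa [hω1] at this
  have hωltb : ∀ s ∈ Ioc (0:ℝ) 1, ωp s < p/(p-1) := by
    intro s hs
    have := hωanti 0 (by norm_num) s ⟨hs.1.le, hs.2⟩ hs.1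
    exact lt_of_lt_of_le this (hmem 0 (by norm_num)).2
  have hgmono : StrictMonoOn (fun s => -ωp s) (Icc (0:ℝ) 1) := by
    intro s hs t ht hst
    simpa using hωanti s hs t ht hst
  have hexl : ∀ a ∈ Icc (0:ℝ) 1, ωp a < p/(p-1) →
      ∀ u < -ωp a, ∃ c ∈ Icc (0:ℝ) 1, -ωp c ∈ Ico u (-ωp a) := by
    intro a ha hab u hu
    have h1a : 1 ≤ ωp a := (hmem a ha).1
    have hu' : ωp a < -u := by linarith
    set w := min ((ωp a + -u)/2) ((ωp a + p/(p-1))/2) with hw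
    have hw1 : ωp a < w := lt_min (by linarith) (by linarith)
    have hwb : w ≤ p/(p-1) := le_trans (min_le_right _ _) (by linarith)
    have hwu : w < -u := lt_of_le_of_lt (min_le_left _ _) (by linarith)
    obtain ⟨hc, hωc⟩ := hωH w (by linarith) hwb
    refine ⟨Hp p w, hc, ?_⟩
    rw [hωc, mem_Ico]
    exact ⟨by linarith, by linarith⟩
  have hexr : ∀ a ∈ Icc (0:ℝ) 1, 1 < ωp a →
      ∀ u, -ωp a < u → ∃ c ∈ Icc (0:ℝ) 1, -ωp c ∈ Ioc (-ωp a) u := by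
    intro a ha ha1 u hu
    have hab : ωp a ≤ p/(p-1) := (hmem a ha).2
    have hu' : -u < ωp a := by linarith
    set w := max ((ωp a + -u)/2) ((ωp a + 1)/2) with hw
    have hw1 : w < ωp a := max_lt (by linarith) (by linarith)
    have hwge1 : 1 ≤ w := le_trans (by linarith) (le_max_right _ _)
    have hwu : -u ≤ w := le_trans (by linarith) (le_max_left _ _)
    obtain ⟨hc, hωc⟩ := hωH w hwge1 (by linarith)
    refine ⟨Hp p w, hc, ?_⟩
    rw [hωc, mem_Ioc]
    exact ⟨by linarith, by linarith⟩
  have hcontAt : ∀ a ∈ Ioo (0:ℝ) 1, ContinuousAt ωp a := by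
    intro a ha
    have h1 : 1 < ωp a := hωgt1 a ⟨ha.1.le, ha.2⟩
    have h2 : ωp a < p/(p-1) := hωltb a ⟨ha.1, ha.2.le⟩
    have hmemIcc : a ∈ Icc (0:ℝ) 1 := ⟨ha.1.le, ha.2.le⟩
    have hc := hgmono.continuousAt_of_exists_between (Icc_mem_nhds ha.1 ha.2)
      (hexl a hmemIcc h2) (hexr a hmemIcc h1)
    have := hc.neg
    simp only [Pi.neg_def, neg_neg] at this; exact this
  have hcontLeft : ContinuousWithinAt ωp (Iic 1) 1 := by
    have h2 : ωp 1 < p/(p-1) := by rw [hω1]; exact hb1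
    have hc := hgmono.continuousWithinAt_left_of_exists_between
      (Icc_mem_nhdsLE_of_mem (by norm_num : (1:ℝ) ∈ Ioc 0 1))
      (hexl 1 (by norm_num) h2)
    have := hc.neg
    simp only [Pi.neg_def, neg_neg] at this; exact this
  have hωderiv : ∀ a ∈ Ioo (0:ℝ) 1,
      HasDerivAt ωp (p*((p-1)*(ωp a)^(p-2)) - (p-1)*(p*(ωp a)^(p-1)))⁻¹ a := by
    intro a ha
    have h1 : 1 < ωp a := hωgt1 a ⟨ha.1.le, ha.2⟩
    refine HasDerivAt.of_local_left_inverse (hcontAt a ha) (Hp_deriv _ (by linarith))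
      (Hp_deriv_neg hp h1).ne ?_
    filter_upwards [Icc_mem_nhds ha.1 ha.2] with y hy using hH y hy
  -- G derivative at interior points
  have hGd : ∀ a ∈ Ioo (0:ℝ) 1,
      HasDerivAt (fun s₁ : ℝ => ωp s₁ ^ p - (p / (p - q)) * ωp s₁ ^ (p - q) + (q / (p - q)) * s₁)
        (q/(p-q) - (ωp a - (ωp a)^(1-q))/((ωp a - 1)*(p-1))) a := by
    intro a ha
    have hw1 : 1 < ωp a := hωgt1 a ⟨ha.1.le, ha.2⟩
    have hw0 : (0:ℝ) < ωp a := by linarith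
    have hωd := hωderiv a ha
    have h1 : HasDerivAt (fun s => ωp s ^ p)
        (p * (ωp a)^(p-1) * (p*((p-1)*(ωp a)^(p-2)) - (p-1)*(p*(ωp a)^(p-1)))⁻¹) a :=
      HasDerivAt.comp a (Real.hasDerivAt_rpow_const (Or.inl hw0.ne')) hωd
    have h2 : HasDerivAt (fun s => ωp s ^ (p-q))
        ((p-q) * (ωp a)^(p-q-1) * (p*((p-1)*(ωp a)^(p-2)) - (p-1)*(p*(ωp a)^(p-1)))⁻¹) a :=
      HasDerivAt.comp a (Real.hasDerivAt_rpow_const (Or.inl hw0.ne')) hωd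
    have h3 : HasDerivAt (fun s : ℝ => (q/(p-q)) * s) (q/(p-q)) a := by
      simpa using (hasDerivAt_id a).const_mul (q/(p-q))
    have hsum := (h1.sub (h2.const_mul (p/(p-q)))).add h3
    refine hsum.congr_deriv ?_
    exact (Gderiv_algebra hp hq hpq hw1).symm
  have hG1 : ωp 1 ^ p - (p / (p - q)) * ωp 1 ^ (p - q) + (q / (p - q)) * 1 = 0 := by
    rw [hω1, Real.one_rpow, Real.one_rpow]
    field_simp
    ring
  -- concavity
  have hconc : StrictConcaveOn ℝ (Ioo 0 1)
      (fun s₁ : ℝ => ωp s₁ ^ p - (p / (p - q)) * ωp s₁ ^ (p - q) + (q / (p - q)) * s₁) := by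
    apply StrictAntiOn.strictConcaveOn_of_deriv (convex_Ioo 0 1)
    · exact fun a ha => ((hGd a ha).continuousAt).continuousWithinAt
    · rw [interior_Ioo]
      intro s hs t ht hst
      rw [(hGd s hs).deriv, (hGd t ht).deriv]
      have h1s : 1 < ωp s := hωgt1 s ⟨hs.1.le, hs.2⟩
      have h1t : 1 < ωp t := hωgt1 t ⟨ht.1.le, ht.2⟩
      have hlt : ωp t < ωp s := hωanti s ⟨hs.1.le, hs.2.le⟩ t ⟨ht.1.le, ht.2.le⟩ hst
      exact phi_strictMono hq hpq (mem_Ioi.mpr h1t) (mem_Ioi.mpr h1s) hlt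
  -- derivative within Iio 1 at 1
  have hslope : HasDerivWithinAt
      (fun s₁ : ℝ => ωp s₁ ^ p - (p / (p - q)) * ωp s₁ ^ (p - q) + (q / (p - q)) * s₁)
      (q * (q - 1) / ((p - 1) * (p - q))) (Iio 1) 1 := by
    have hF0d : ∀ x : ℝ, 0 < x → HasDerivAt (fun w : ℝ => w^p - (p/(p-q)) * w^(p-q))
        (p*x^(p-1) - (p/(p-q))*((p-q)*x^(p-q-1))) x := by
      intro x hx
      exact (Real.hasDerivAt_rpow_const (Or.inl hx.ne')).sub
        ((Real.hasDerivAt_rpow_const (Or.inl hx.ne')).const_mul _)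
    have hff' : ∀ᶠ x in 𝓝[>] (1:ℝ), HasDerivAt
        (fun w : ℝ => (w^p - (p/(p-q)) * w^(p-q)) - (1 - p/(p-q)))
        (p*x^(p-1) - (p/(p-q))*((p-q)*x^(p-q-1))) x := by
      filter_upwards [self_mem_nhdsWithin] with x hx
      exact (hF0d x (lt_trans one_pos hx)).sub_const _
    have hgg' : ∀ᶠ x in 𝓝[>] (1:ℝ), HasDerivAt (fun w : ℝ => Hp p w - 1)
        (p*((p-1)*x^(p-2)) - (p-1)*(p*x^(p-1))) x := by
      filter_upwards [self_mem_nhdsWithin] with x hx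
      exact (Hp_deriv x (lt_trans one_pos hx)).sub_const 1
    have hg' : ∀ᶠ x in 𝓝[>] (1:ℝ), (p*((p-1)*x^(p-2)) - (p-1)*(p*x^(p-1))) ≠ 0 := by
      filter_upwards [self_mem_nhdsWithin] with x hx
      exact (Hp_deriv_neg hp hx).ne
    have hfa : Tendsto (fun w : ℝ => (w^p - (p/(p-q)) * w^(p-q)) - (1 - p/(p-q)))
        (𝓝[>] (1:ℝ)) (𝓝 0) := by
      have hcont := (hF0d 1 one_pos).continuousAt
      have h1 : (1:ℝ)^p - (p/(p-q)) * (1:ℝ)^(p-q) = 1 - p/(p-q) := by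
        simp [Real.one_rpow]
      have h2 := hcont.tendsto.mono_left (nhdsWithin_le_nhds (s := Ioi (1:ℝ)))
      rw [h1] at h2
      simpa using h2.sub_const (1 - p/(p-q))
    have hga : Tendsto (fun w : ℝ => Hp p w - 1) (𝓝[>] (1:ℝ)) (𝓝 0) := by
      have hcont := (Hp_deriv (p := p) 1 one_pos).continuousAt
      have h2 := hcont.tendsto.mono_left (nhdsWithin_le_nhds (s := Ioi (1:ℝ)))
      rw [Hp_one] at h2
      simpa using h2.sub_const 1
    have hdiv : Tendsto (fun x : ℝ => (p*x^(p-1) - (p/(p-q))*((p-q)*x^(p-q-1)))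
        / (p*((p-1)*x^(p-2)) - (p-1)*(p*x^(p-1)))) (𝓝[>] (1:ℝ))
        (𝓝 (q*(q-1)/((p-1)*(p-q)) - q/(p-q))) := by
      have h := (phi_tendsto hq hpq).sub_const (q/(p-q))
      refine Tendsto.congr' ?_ h
      filter_upwards [self_mem_nhdsWithin] with x hx
      have halg := Gderiv_algebra hp hq hpq (mem_Ioi.mp hx)
      rw [div_eq_mul_inv]
      linear_combination halg
    have hlh := HasDerivAt.lhopital_zero_nhdsGT hff' hgg' hg' hfa hga hdiv
    have hωtends : Tendsto ωp (𝓝[<] (1:ℝ)) (𝓝[>] (1:ℝ)) := by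
      apply tendsto_nhdsWithin_of_tendsto_nhds_of_eventually_within
      · have h0 := hcontLeft.tendsto
        rw [hω1] at h0
        exact h0.mono_left (nhdsWithin_mono 1 Iio_subset_Iic_self)
      · filter_upwards [Ioo_mem_nhdsLT_of_mem (by norm_num : (1:ℝ) ∈ Ioc 0 1)] with x hx
        exact hωgt1 x ⟨hx.1.le, hx.2⟩
    have hcomp := hlh.comp hωtends
    rw [hasDerivWithinAt_iff_tendsto_slope,
      diff_singleton_eq_self (by simp : (1:ℝ) ∉ Iio 1)]
    have hfinal0 := hcomp.add_const (q/(p-q))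
    have heq : (fun s => ((fun x : ℝ => ((x^p - (p/(p-q)) * x^(p-q)) - (1 - p/(p-q)))
          / (Hp p x - 1)) ∘ ωp) s + q/(p-q)) =ᶠ[𝓝[<] (1:ℝ)]
        slope (fun s₁ : ℝ => ωp s₁ ^ p - (p / (p - q)) * ωp s₁ ^ (p - q) + (q / (p - q)) * s₁) 1 := by
      filter_upwards [Ioo_mem_nhdsLT_of_mem (by norm_num : (1:ℝ) ∈ Ioc 0 1)] with s hs
      have hs1 : s - 1 ≠ 0 := sub_ne_zero.mpr (ne_of_lt hs.2)
      have hHs : Hp p (ωp s) = s := hH s ⟨hs.1.le, hs.2.le⟩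
      simp only [Function.comp_apply]
      rw [slope_def_field, hω1, Real.one_rpow, Real.one_rpow, hHs]
      field_simp
      ring
    have hfinal := hfinal0.congr' heq
    have hval : (q*(q-1)/((p-1)*(p-q)) - q/(p-q)) + q/(p-q) = q*(q-1)/((p-1)*(p-q)) := by ring
    rw [hval] at hfinal
    exact hfinal
  have hLpos : 0 < q * (q - 1) / ((p - 1) * (p - q)) :=
    div_pos (mul_pos (by linarith) (by linarith)) (mul_pos hp1 hpq')
  -- negativity
  have hneg : ∀ s₁ ∈ Ioo (0 : ℝ) 1,
      ωp s₁ ^ p - (p / (p - q)) * ωp s₁ ^ (p - q) + (q / (p - q)) * s₁ < 0 := by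
    have hcω : ContinuousOn ωp (Ioc 0 1) := by
      intro a ha
      rcases eq_or_lt_of_le ha.2 with h | h
      · subst h
        exact hcontLeft.mono Ioc_subset_Iic_self
      · exact (hcontAt a ⟨ha.1, h⟩).continuousWithinAt
    have hcontG : ContinuousOn
        (fun s₁ : ℝ => ωp s₁ ^ p - (p / (p - q)) * ωp s₁ ^ (p - q) + (q / (p - q)) * s₁)
        (Ioc 0 1) := by
      refine ContinuousOn.add (ContinuousOn.sub ?_ ?_) ?_
      · exact hcω.rpow_const (fun x _ => Or.inr (by linarith))
      · exact continuousOn_const.mul (hcω.rpow_const (fun x _ => Or.inr (by linarith)))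
      · exact continuousOn_const.mul continuousOn_id
    have hmono : StrictMonoOn
        (fun s₁ : ℝ => ωp s₁ ^ p - (p / (p - q)) * ωp s₁ ^ (p - q) + (q / (p - q)) * s₁)
        (Ioc 0 1) := by
      apply strictMonoOn_of_deriv_pos (convex_Ioc 0 1) hcontG
      intro a ha
      rw [interior_Ioc] at ha
      rw [(hGd a ha).deriv]
      have h1 : 1 < ωp a := hωgt1 a ⟨ha.1.le, ha.2⟩
      exact lt_trans hLpos (phi_gt hq hpq h1)
    intro s hs
    have := hmono ⟨hs.1, hs.2.le⟩ (by norm_num : (1:ℝ) ∈ Ioc 0 1) hs.2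
    calc _ < _ := this
    _ = 0 := hG1
  exact ⟨hconc, hG1, hslope, hLpos, hneg⟩
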